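/- The Fréchet distance between two curves is at most their discrete Fréchet distance, and the difference between the discrete and continuous Fréchet distance of two polygonal curves is bounded by the length of the longest edge among the two curves. -/

import Mathlib

open Set

/-- The polygonal curve with vertex sequence `p`, parametrized affinely on each `[i, i+1]`. -/
noncomputable def polyline {d : ℕ} (p : ℕ → EuclideanSpace ℝ (Fin d)) (t : ℝ) :
    EuclideanSpace ℝ (Fin d) :=
  (1 - Int.fract t) • p ⌊t⌋.toNat + Int.fract t • p (⌊t⌋.toNat + 1)

/-- A monotone reparametrization of `[0,1]` onto `[0,A]`. -/
def ReparamTo (A : ℝ) (σ : ℝ → ℝ) : Prop :=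
  ContinuousOn σ (Icc 0 1) ∧ MonotoneOn σ (Icc 0 1) ∧ σ 0 = 0 ∧ σ 1 = A

/-- The (continuous) Fréchet distance between curves `P : [0,A] → ℝ^d`, `Q : [0,B] → ℝ^d`. -/
noncomputable def frechetDist' {d : ℕ} (P Q : ℝ → EuclideanSpace ℝ (Fin d)) (A B : ℝ) : ℝ :=
  sInf {r : ℝ | ∃ σ τ : ℝ → ℝ, ReparamTo A σ ∧ ReparamTo B τ ∧
    ∀ t ∈ Icc (0:ℝ) 1, ‖P (σ t) - Q (τ t)‖ ≤ r}

/-- A coupling between vertex index sets `{0..n}` and `{0..m}`: starts at `(0,0)`, ends at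
`(n,m)`, and each step advances one or both indices by one. -/
def IsCoupling (n m K : ℕ) (c : ℕ → ℕ × ℕ) : Prop :=
  c 0 = (0, 0) ∧ c K = (n, m) ∧
  ∀ k < K, ((c (k+1)).1 = (c k).1 ∨ (c (k+1)).1 = (c k).1 + 1) ∧
           ((c (k+1)).2 = (c k).2 ∨ (c (k+1)).2 = (c k).2 + 1) ∧ c (k+1) ≠ c k

/-- The discrete Fréchet distance between the vertex sequences `p` (of length `n`)
and `q` (of length `m`). -/
noncomputable def discreteFrechet {d : ℕ} (p q : ℕ → EuclideanSpace ℝ (Fin d))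
    (n m : ℕ) : ℝ :=
  sInf {r : ℝ | ∃ K : ℕ, ∃ c : ℕ → ℕ × ℕ, IsCoupling n m K c ∧
    ∀ k ≤ K, ‖p (c k).1 - q (c k).2‖ ≤ r}


variable {E : Type*} [NormedAddCommGroup E] [NormedSpace ℝ E]

/-- Generic piecewise-linear interpolation. -/
noncomputable def interp (a : ℕ → E) (t : ℝ) : E :=
  (1 - Int.fract t) • a ⌊t⌋.toNat + Int.fract t • a (⌊t⌋.toNat + 1)

lemma interp_natCast (a : ℕ → E) (k : ℕ) : interp a (k : ℝ) = a k := by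
  simp [interp, Int.fract_natCast, Int.floor_natCast]

lemma interp_eq_of_mem (a : ℕ → E) {k : ℕ} {t : ℝ} (ht : t ∈ Icc (k : ℝ) (k + 1)) :
    interp a t = (1 - (t - k)) • a k + (t - k) • a (k + 1) := by
  rcases lt_or_eq_of_le ht.2 with h | h
  · have hfl : ⌊t⌋ = (k : ℤ) := by
      rw [Int.floor_eq_iff]
      constructor
      · exact_mod_cast ht.1
      · push_cast; exact h
    have : Int.fract t = t - k := by
      rw [Int.fract, hfl]; norm_num
    simp [interp, hfl, this]
  · subst h
    rw [show ((k:ℝ)+1) = ((k+1 : ℕ) : ℝ) by push_cast; ring, interp_natCast]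
    norm_num

lemma continuousOn_union_closed {s t : Set ℝ} {f : ℝ → E} (hs : IsClosed s) (ht : IsClosed t)
    (fs : ContinuousOn f s) (ft : ContinuousOn f t) : ContinuousOn f (s ∪ t) := by
  intro x hx
  apply ContinuousWithinAt.union
  · by_cases h : x ∈ s
    · exact fs x h
    · exact continuousWithinAt_of_notMem_closure (by rwa [hs.closure_eq])
  · by_cases h : x ∈ t
    · exact ft x h
    · exact continuousWithinAt_of_notMem_closure (by rwa [ht.closure_eq])

lemma interp_continuousOn_Icc (a : ℕ → E) (k : ℕ) :
    ContinuousOn (interp a) (Icc (k : ℝ) (k + 1)) := by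
  apply ContinuousOn.congr (f := fun t => (1 - (t - (k:ℝ))) • a k + (t - (k:ℝ)) • a (k + 1))
  · exact ((Continuous.smul (by continuity) continuous_const).add
      (Continuous.smul (by continuity) continuous_const)).continuousOn
  · intro t ht; exact interp_eq_of_mem a ht

lemma interp_continuousOn (a : ℕ → E) (N : ℕ) :
    ContinuousOn (interp a) (Icc (0 : ℝ) N) := by
  induction N with
  | zero =>
    simp only [Nat.cast_zero, Icc_self]
    intro x hx
    simp only [mem_singleton_iff] at hx
    subst hx
    exact continuousWithinAt_singleton
  | succ N ih =>
    have : Icc (0:ℝ) (N+1) = Icc (0:ℝ) N ∪ Icc (N:ℝ) (N+1) := by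
      rw [Icc_union_Icc_eq_Icc (by positivity) (by linarith)]
    rw [show ((N+1 : ℕ) : ℝ) = (N : ℝ) + 1 by push_cast; ring, this]
    exact continuousOn_union_closed isClosed_Icc isClosed_Icc ih (interp_continuousOn_Icc a N)

lemma interp_monotoneOn {a : ℕ → ℝ} (ha : Monotone a) : MonotoneOn (interp a) (Ici (0:ℝ)) := by
  have hmem : ∀ x : ℝ, 0 ≤ x → interp a x ∈ Icc (a ⌊x⌋.toNat) (a (⌊x⌋.toNat + 1)) := by
    intro x hx
    have h1 : a ⌊x⌋.toNat ≤ a (⌊x⌋.toNat + 1) := ha (by omega)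
    have hf0 : 0 ≤ Int.fract x := Int.fract_nonneg x
    have hf1 : Int.fract x ≤ 1 := le_of_lt (Int.fract_lt_one x)
    constructor
    · have : (1 - Int.fract x) • a ⌊x⌋.toNat + Int.fract x • a ⌊x⌋.toNat ≤ interp a x := by
        unfold interp
        gcongr
      simpa [smul_eq_mul, ← add_mul] using this
    · have : interp a x ≤ (1 - Int.fract x) • a (⌊x⌋.toNat + 1) + Int.fract x • a (⌊x⌋.toNat + 1) := by
        unfold interp
        gcongr
      simpa [smul_eq_mul, ← add_mul] using this
  intro s hs t ht hst
  rcases eq_or_lt_of_le (Int.floor_le_floor hst) with hfl | hfl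
  · have hfr : Int.fract s ≤ Int.fract t := by
      unfold Int.fract; rw [hfl]; linarith
    unfold interp
    rw [hfl]
    have h1 : a ⌊t⌋.toNat ≤ a (⌊t⌋.toNat + 1) := ha (by omega)
    simp only [smul_eq_mul]
    nlinarith [Int.fract_nonneg s, Int.fract_lt_one t]
  · have h1 : ⌊s⌋.toNat + 1 ≤ ⌊t⌋.toNat := by
      have h0s : (0:ℤ) ≤ ⌊s⌋ := Int.floor_nonneg.2 hs
      omega
    calc interp a s ≤ a (⌊s⌋.toNat + 1) := (hmem s hs).2
    _ ≤ a ⌊t⌋.toNat := ha h1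
    _ ≤ interp a t := (hmem t ht).1

lemma interp_comp {a : ℕ → ℕ} (ha : ∀ k, a (k+1) = a k ∨ a (k+1) = a k + 1)
    (p : ℕ → E) {x : ℝ} (hx : 0 ≤ x) :
    interp p (interp (fun k => (a k : ℝ)) x) =
      (1 - Int.fract x) • p (a ⌊x⌋.toNat) + Int.fract x • p (a (⌊x⌋.toNat + 1)) := by
  set k := ⌊x⌋.toNat with hk
  have hf0 : 0 ≤ Int.fract x := Int.fract_nonneg x
  have hf1 : Int.fract x < 1 := Int.fract_lt_one x
  rcases ha k with h | h
  · have : interp (fun k => (a k : ℝ)) x = (a k : ℝ) := by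
      unfold interp
      simp only [h, ← hk, smul_eq_mul]
      ring
    rw [this, interp_natCast, h]
    rw [← add_smul]
    norm_num
  · have hval : interp (fun k => (a k : ℝ)) x = (a k : ℝ) + Int.fract x := by
      unfold interp
      simp only [h, ← hk, smul_eq_mul]
      push_cast
      ring
    rw [hval]
    have hfl : ⌊(a k : ℝ) + Int.fract x⌋ = (a k : ℤ) := by
      rw [Int.floor_eq_iff]
      push_cast
      constructor <;> linarith
    have hfr : Int.fract ((a k : ℝ) + Int.fract x) = Int.fract x := by
      rw [Int.fract, hfl]
      push_cast
      ring
    unfold interp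
    rw [hfl, hfr, h]
    norm_num

lemma interp_dist_left (q : ℕ → E) {j : ℕ} {s : ℝ} (hs : s ∈ Icc (j : ℝ) (j + 1)) :
    ‖interp q s - q j‖ ≤ ‖q (j + 1) - q j‖ := by
  rw [interp_eq_of_mem q hs]
  have h0 : 0 ≤ s - j := by linarith [hs.1]
  have h1 : s - j ≤ 1 := by linarith [hs.2]
  have : (1 - (s - (j:ℝ))) • q j + (s - (j:ℝ)) • q (j + 1) - q j
      = (s - (j:ℝ)) • (q (j+1) - q j) := by
    rw [smul_sub]
    rw [sub_smul, one_smul]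
    abel
  rw [this, norm_smul]
  rw [Real.norm_eq_abs, abs_of_nonneg h0]
  nlinarith [norm_nonneg (q (j+1) - q j)]

/-- From a coupling, build reparametrizations realizing the same bound. -/
lemma reparam_of_coupling (p q : ℕ → E) (n m : ℕ) (hn : 1 ≤ n) (r : ℝ)
    (K : ℕ) (c : ℕ → ℕ × ℕ) (hc : IsCoupling n m K c)
    (hr : ∀ k ≤ K, ‖p (c k).1 - q (c k).2‖ ≤ r) :
    ∃ σ τ : ℝ → ℝ, ReparamTo n σ ∧ ReparamTo m τ ∧
      ∀ t ∈ Icc (0:ℝ) 1, ‖interp p (σ t) - interp q (τ t)‖ ≤ r := by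
  obtain ⟨hc0, hcK, hstep⟩ := hc
  have hK : 1 ≤ K := by
    by_contra h
    push_neg at h
    interval_cases K
    rw [hc0] at hcK
    have := congrArg Prod.fst hcK
    simp at this
    omega
  set a : ℕ → ℕ := fun k => (c (min k K)).1 with ha
  set b : ℕ → ℕ := fun k => (c (min k K)).2 with hb
  have hastep : ∀ k, a (k+1) = a k ∨ a (k+1) = a k + 1 := by
    intro k
    rcases lt_or_ge k K with h | h
    · have h1 : min k K = k := by omega
      have h2 : min (k+1) K = k+1 := by omega
      simp only [ha, h1, h2]
      exact (hstep k h).1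
    · have h1 : min k K = K := by omega
      have h2 : min (k+1) K = K := by omega
      left
      show (c ((k+1) ⊓ K)).1 = (c (k ⊓ K)).1
      rw [h1, h2]
  have hbstep : ∀ k, b (k+1) = b k ∨ b (k+1) = b k + 1 := by
    intro k
    rcases lt_or_ge k K with h | h
    · have h1 : min k K = k := by omega
      have h2 : min (k+1) K = k+1 := by omega
      simp only [hb, h1, h2]
      exact (hstep k h).2.1
    · have h1 : min k K = K := by omega
      have h2 : min (k+1) K = K := by omega
      left
      show (c ((k+1) ⊓ K)).2 = (c (k ⊓ K)).2
      rw [h1, h2]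
  have hamono : Monotone fun k => ((a k : ℕ) : ℝ) := by
    apply monotone_nat_of_le_succ
    intro k
    have : a k ≤ a (k+1) := by rcases hastep k with h | h <;> omega
    exact_mod_cast this
  have hbmono : Monotone fun k => ((b k : ℕ) : ℝ) := by
    apply monotone_nat_of_le_succ
    intro k
    have : b k ≤ b (k+1) := by rcases hbstep k with h | h <;> omega
    exact_mod_cast this
  refine ⟨fun t => interp (fun k => ((a k : ℕ) : ℝ)) (K * t),
          fun t => interp (fun k => ((b k : ℕ) : ℝ)) (K * t), ?_, ?_, ?_⟩
  · refine ⟨?_, ?_, ?_, ?_⟩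
    · apply (interp_continuousOn _ K).comp (by fun_prop)
      intro t ht
      constructor
      · exact mul_nonneg (Nat.cast_nonneg K) ht.1
      · calc (K:ℝ) * t ≤ K * 1 := by
              apply mul_le_mul_of_nonneg_left ht.2 (Nat.cast_nonneg K)
        _ = K := by ring
    · intro s hs t ht hst
      exact interp_monotoneOn hamono (mul_nonneg (Nat.cast_nonneg K) hs.1)
        (mul_nonneg (Nat.cast_nonneg K) ht.1)
        (mul_le_mul_of_nonneg_left hst (Nat.cast_nonneg K))
    · show interp (fun k => ((a k : ℕ) : ℝ)) ((K:ℝ) * 0) = 0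
      rw [mul_zero, show (0:ℝ) = ((0:ℕ):ℝ) by norm_num, interp_natCast]
      have h0 : a 0 = 0 := by simp only [ha]; rw [min_eq_left (by omega), hc0]
      rw [h0]
    · show interp (fun k => ((a k : ℕ) : ℝ)) ((K:ℝ) * 1) = (n:ℝ)
      rw [mul_one, interp_natCast]
      have h0 : a K = n := by simp only [ha]; rw [min_self, hcK]
      rw [h0]
  · refine ⟨?_, ?_, ?_, ?_⟩
    · apply (interp_continuousOn _ K).comp (by fun_prop)
      intro t ht
      constructor
      · exact mul_nonneg (Nat.cast_nonneg K) ht.1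
      · calc (K:ℝ) * t ≤ K * 1 := by
              apply mul_le_mul_of_nonneg_left ht.2 (Nat.cast_nonneg K)
        _ = K := by ring
    · intro s hs t ht hst
      exact interp_monotoneOn hbmono (mul_nonneg (Nat.cast_nonneg K) hs.1)
        (mul_nonneg (Nat.cast_nonneg K) ht.1)
        (mul_le_mul_of_nonneg_left hst (Nat.cast_nonneg K))
    · show interp (fun k => ((b k : ℕ) : ℝ)) ((K:ℝ) * 0) = 0
      rw [mul_zero, show (0:ℝ) = ((0:ℕ):ℝ) by norm_num, interp_natCast]
      have h0 : b 0 = 0 := by simp only [hb]; rw [min_eq_left (by omega), hc0]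
      rw [h0]
    · show interp (fun k => ((b k : ℕ) : ℝ)) ((K:ℝ) * 1) = (m:ℝ)
      rw [mul_one, interp_natCast]
      have h0 : b K = m := by simp only [hb]; rw [min_self, hcK]
      rw [h0]
  · intro t ht
    have hx : (0:ℝ) ≤ K * t := mul_nonneg (Nat.cast_nonneg K) ht.1
    rw [interp_comp hastep p hx, interp_comp hbstep q hx]
    set u := Int.fract ((K:ℝ) * t) with hu
    set k := (⌊(K:ℝ) * t⌋).toNat with hk
    have hu0 : 0 ≤ u := Int.fract_nonneg _
    have hu1 : u < 1 := Int.fract_lt_one _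
    have heq : ((1 - u) • p (a k) + u • p (a (k+1))) - ((1 - u) • q (b k) + u • q (b (k+1)))
        = (1 - u) • (p (a k) - q (b k)) + u • (p (a (k+1)) - q (b (k+1))) := by
      rw [smul_sub, smul_sub]; abel
    rw [heq]
    have h1 : ‖p (a k) - q (b k)‖ ≤ r := hr (min k K) (min_le_right _ _)
    have h2 : ‖p (a (k+1)) - q (b (k+1))‖ ≤ r := hr (min (k+1) K) (min_le_right _ _)
    calc ‖(1 - u) • (p (a k) - q (b k)) + u • (p (a (k+1)) - q (b (k+1)))‖
        ≤ ‖(1 - u) • (p (a k) - q (b k))‖ + ‖u • (p (a (k+1)) - q (b (k+1)))‖ := norm_add_le _ _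
      _ = (1 - u) * ‖p (a k) - q (b k)‖ + u * ‖p (a (k+1)) - q (b (k+1))‖ := by
          rw [norm_smul, norm_smul, Real.norm_eq_abs, Real.norm_eq_abs,
            abs_of_nonneg (by linarith), abs_of_nonneg hu0]
      _ ≤ (1 - u) * r + u * r := by
          apply add_le_add
          · apply mul_le_mul_of_nonneg_left h1 (by linarith)
          · apply mul_le_mul_of_nonneg_left h2 hu0
      _ = r := by ring

/-- Choose parameter times hitting each integer value. -/
lemma reparam_points {σ : ℝ → ℝ} {n : ℕ} (hσ : ReparamTo n σ) :
    ∃ T : ℕ → ℝ, T 0 = 0 ∧ (∀ i, T i ∈ Icc (0:ℝ) 1) ∧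
      (∀ i, σ (T i) = ((min i n : ℕ) : ℝ)) ∧ (∀ i, n < i → T i = 1) ∧ Monotone T := by
  obtain ⟨hc, hmono, h0, h1⟩ := hσ
  have hex : ∀ i : ℕ, ∃ t, t ∈ Icc (0:ℝ) 1 ∧ σ t = ((min i n : ℕ) : ℝ) ∧
      (i = 0 → t = 0) ∧ (n < i → t = 1) := by
    intro i
    rcases Nat.eq_zero_or_pos i with hi | hi
    · subst hi
      refine ⟨0, ⟨le_refl _, zero_le_one⟩, ?_, fun _ => rfl, fun h => by omega⟩
      rw [h0]; simp
    · rcases le_or_gt i n with h2 | h2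
      · have hmem : ((i:ℝ)) ∈ Icc (σ 0) (σ 1) := by
          rw [h0, h1]
          exact ⟨by positivity, by exact_mod_cast h2⟩
        obtain ⟨t, htm, hts⟩ := intermediate_value_Icc zero_le_one hc hmem
        refine ⟨t, htm, ?_, fun h => by omega, fun h => by omega⟩
        rw [hts]
        congr 1
        omega
      · refine ⟨1, ⟨zero_le_one, le_refl _⟩, ?_, fun h => by omega, fun _ => rfl⟩
        rw [h1]
        congr 1
        omega
  choose T hTmem hTval hT0 hT1 using hex
  refine ⟨T, hT0 0 rfl, hTmem, hTval, hT1, ?_⟩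
  intro i j hij
  rcases eq_or_lt_of_le hij with rfl | hij
  · exact le_refl _
  by_contra hlt
  push_neg at hlt
  rcases le_or_gt j n with hj | hj
  · have := hmono (hTmem j) (hTmem i) (le_of_lt hlt)
    rw [hTval i, hTval j] at this
    have h' : min j n ≤ min i n := by exact_mod_cast this
    have : i = j := by omega
    subst this
    exact lt_irrefl _ hlt
  · rw [hT1 j hj] at hlt
    exact absurd (hTmem i).2 (not_le.2 hlt)

/-- One case of the distance bound for a coupled pair. -/
lemma key_case (p q : ℕ → E) (n m : ℕ) (σ τ : ℝ → ℝ)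
    (hτm : MonotoneOn τ (Icc 0 1)) (hτ1 : τ 1 = m) (r L : ℝ) (hL0 : 0 ≤ L)
    (hLq : ∀ j < m, ‖q (j+1) - q j‖ ≤ L)
    (hb : ∀ t ∈ Icc (0:ℝ) 1, ‖interp p (σ t) - interp q (τ t)‖ ≤ r)
    (i j : ℕ) (hj : j ≤ m) (t uj uj1 : ℝ)
    (htm : t ∈ Icc (0:ℝ) 1) (hujm : uj ∈ Icc (0:ℝ) 1) (huj1m : uj1 ∈ Icc (0:ℝ) 1)
    (hσt : σ t = (i : ℝ)) (hτuj : τ uj = (j : ℝ)) (hτuj1 : τ uj1 ≤ (j : ℝ) + 1)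
    (h1 : uj ≤ t) (h2 : t ≤ uj1) :
    ‖p i - q j‖ ≤ r + L := by
  set s := τ t with hs
  have hslo : (j : ℝ) ≤ s := by
    rw [← hτuj]
    exact hτm hujm htm h1
  have hshi : s ≤ (j : ℝ) + 1 := le_trans (hτm htm huj1m h2) hτuj1
  have hpi : interp p (σ t) = p i := by rw [hσt, interp_natCast]
  have hfirst : ‖p i - interp q s‖ ≤ r := by
    rw [← hpi]
    exact hb t htm
  have hsecond : ‖interp q s - q j‖ ≤ L := by
    rcases lt_or_ge j m with hjm | hjm
    · exact le_trans (interp_dist_left q ⟨hslo, hshi⟩) (hLq j hjm)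
    · have hjm' : j = m := by omega
      have hstop : s ≤ (m : ℝ) := by
        rw [← hτ1]
        exact hτm htm ⟨zero_le_one, le_refl _⟩ htm.2
      have hseq : s = (j : ℝ) := le_antisymm (by rw [hjm']; exact hstop) hslo
      rw [hseq, interp_natCast]
      simpa using hL0
  calc ‖p i - q j‖ ≤ ‖p i - interp q s‖ + ‖interp q s - q j‖ := norm_sub_le_norm_sub_add_norm_sub _ _ _
    _ ≤ r + L := add_le_add hfirst hsecond

/-- From reparametrizations achieving bound `r`, build a coupling achieving `r + L`. -/
lemma coupling_of_reparam (p q : ℕ → E) (n m : ℕ) (hn : 1 ≤ n) (hm : 1 ≤ m) (L r : ℝ)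
    (hLp : ∀ i < n, ‖p (i+1) - p i‖ ≤ L) (hLq : ∀ j < m, ‖q (j+1) - q j‖ ≤ L)
    (σ τ : ℝ → ℝ) (hσ : ReparamTo n σ) (hτ : ReparamTo m τ)
    (hb : ∀ t ∈ Icc (0:ℝ) 1, ‖interp p (σ t) - interp q (τ t)‖ ≤ r) :
    ∃ K c, IsCoupling n m K c ∧ ∀ k ≤ K, ‖p (c k).1 - q (c k).2‖ ≤ r + L := by
  classical
  have hL0 : 0 ≤ L := le_trans (norm_nonneg _) (hLq 0 hm)
  obtain ⟨T, hT0, hTmem, hTval, hTtop, hTmono⟩ := reparam_points hσ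
  obtain ⟨U, hU0, hUmem, hUval, hUtop, hUmono⟩ := reparam_points hτ
  set step : ℕ × ℕ → ℕ × ℕ := fun ij =>
    if ij.1 < n ∧ (m ≤ ij.2 ∨ T (ij.1+1) ≤ U (ij.2+1)) then (ij.1+1, ij.2)
    else if ij.2 < m then (ij.1, ij.2+1) else ij with hstepdef
  set c : ℕ → ℕ × ℕ := fun k => step^[k] (0, 0) with hcdef
  have hcsucc : ∀ k, c (k+1) = step (c k) := by
    intro k
    simp only [hcdef, Function.iterate_succ_apply']
  -- the invariant
  have hinv : ∀ k, (c k).1 ≤ n ∧ (c k).2 ≤ m ∧ (c k).1 + (c k).2 = min k (n+m) ∧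
      T (c k).1 ≤ U ((c k).2 + 1) ∧ U (c k).2 ≤ T ((c k).1 + 1) := by
    intro k
    induction k with
    | zero =>
      refine ⟨by simp [hcdef], by simp [hcdef], by simp [hcdef], ?_, ?_⟩
      · show T (0,0).1 ≤ U ((0,0).2 + 1)
        rw [show ((0,0) : ℕ × ℕ).1 = 0 from rfl, hT0]
        exact (hUmem _).1
      · show U (0,0).2 ≤ T ((0,0).1 + 1)
        rw [show ((0,0) : ℕ × ℕ).2 = 0 from rfl, hU0]
        exact (hTmem _).1
    | succ k ih =>
      obtain ⟨hi, hj, hsum, hTU, hUT⟩ := ih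
      rw [hcsucc k]
      by_cases hcond : (c k).1 < n ∧ (m ≤ (c k).2 ∨ T ((c k).1+1) ≤ U ((c k).2+1))
      · have hstep1 : step (c k) = ((c k).1 + 1, (c k).2) := by
          simp only [hstepdef]; rw [if_pos hcond]
        rw [hstep1]
        refine ⟨by omega, by omega, by omega, ?_, ?_⟩
        · show T ((c k).1 + 1) ≤ U ((c k).2 + 1)
          rcases hcond.2 with h | h
          · have : (c k).2 = m := by omega
            rw [this]
            rw [hUtop (m+1) (by omega)]
            exact (hTmem _).2
          · exact h
        · show U (c k).2 ≤ T ((c k).1 + 1 + 1)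
          exact le_trans hUT (hTmono (by omega))
      · by_cases hcond2 : (c k).2 < m
        · have hstep1 : step (c k) = ((c k).1, (c k).2 + 1) := by
            simp only [hstepdef]; rw [if_neg hcond, if_pos hcond2]
          rw [hstep1]
          refine ⟨by omega, by omega, by omega, ?_, ?_⟩
          · show T (c k).1 ≤ U ((c k).2 + 1 + 1)
            exact le_trans hTU (hUmono (by omega))
          · show U ((c k).2 + 1) ≤ T ((c k).1 + 1)
            rcases lt_or_ge (c k).1 n with h | h
            · have : ¬ (m ≤ (c k).2 ∨ T ((c k).1+1) ≤ U ((c k).2+1)) := fun hc => hcond ⟨h, hc⟩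
              push_neg at this
              exact le_of_lt this.2
            · have : (c k).1 = n := by omega
              rw [this, hTtop (n+1) (by omega)]
              exact (hUmem _).2
        · have hstep1 : step (c k) = c k := by
            simp only [hstepdef]; rw [if_neg hcond, if_neg hcond2]
          rw [hstep1]
          have hjm : (c k).2 = m := by omega
          have him : (c k).1 = n := by
            by_contra h
            have h1 : (c k).1 < n := by omega
            exact hcond ⟨h1, Or.inl (by omega)⟩
          refine ⟨hi, hj, by omega, hTU, hUT⟩
  -- the coupling property
  have hcoupling : IsCoupling n m (n+m) c := by
    refine ⟨rfl, ?_, ?_⟩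
    · obtain ⟨hi, hj, hsum, _, _⟩ := hinv (n+m)
      have h1 : (c (n+m)).1 = n := by omega
      have h2 : (c (n+m)).2 = m := by omega
      exact Prod.ext h1 h2
    · intro k hk
      obtain ⟨hi, hj, hsum, _, _⟩ := hinv k
      rw [hcsucc k]
      by_cases hcond : (c k).1 < n ∧ (m ≤ (c k).2 ∨ T ((c k).1+1) ≤ U ((c k).2+1))
      · have hstep1 : step (c k) = ((c k).1 + 1, (c k).2) := by
          simp only [hstepdef]; rw [if_pos hcond]
        rw [hstep1]
        refine ⟨Or.inr rfl, Or.inl rfl, ?_⟩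
        intro h
        have := congrArg Prod.fst h
        simp at this
      · have hcond2 : (c k).2 < m := by
          by_contra h
          have hjm : (c k).2 = m := by omega
          have him : (c k).1 = n := by
            by_contra h'
            exact hcond ⟨by omega, Or.inl (by omega)⟩
          omega
        have hstep1 : step (c k) = ((c k).1, (c k).2 + 1) := by
          simp only [hstepdef]; rw [if_neg hcond, if_pos hcond2]
        rw [hstep1]
        refine ⟨Or.inl rfl, Or.inr rfl, ?_⟩
        intro h
        have := congrArg Prod.snd h
        simp at this
  -- the distance bound
  refine ⟨n+m, c, hcoupling, ?_⟩
  intro k hk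
  obtain ⟨hi, hj, hsum, hTU, hUT⟩ := hinv k
  set i := (c k).1
  set j := (c k).2
  rcases le_or_gt (U j) (T i) with hcase | hcase
  · -- U j ≤ T i ≤ U (j+1) : use t = T i
    have hσTi : σ (T i) = (i : ℝ) := by
      rw [hTval i]
      congr 1
      omega
    have hτUj : τ (U j) = (j : ℝ) := by
      rw [hUval j]
      congr 1
      omega
    have hτUj1 : τ (U (j+1)) ≤ (j : ℝ) + 1 := by
      rw [hUval (j+1)]
      have : min (j+1) m ≤ j + 1 := min_le_left _ _
      exact_mod_cast this
    exact key_case p q n m σ τ hτ.2.1 hτ.2.2.2 r L hL0 hLq hb i j hj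
      (T i) (U j) (U (j+1)) (hTmem i) (hUmem j) (hUmem (j+1)) hσTi hτUj hτUj1 hcase hTU
  · -- T i ≤ U j ≤ T (i+1) : use t = U j, swap roles
    have hτUj : τ (U j) = (j : ℝ) := by
      rw [hUval j]
      congr 1
      omega
    have hσTi : σ (T i) = (i : ℝ) := by
      rw [hTval i]
      congr 1
      omega
    have hσTi1 : σ (T (i+1)) ≤ (i : ℝ) + 1 := by
      rw [hTval (i+1)]
      have : min (i+1) n ≤ i + 1 := min_le_left _ _
      exact_mod_cast this
    have hb' : ∀ t ∈ Icc (0:ℝ) 1, ‖interp q (τ t) - interp p (σ t)‖ ≤ r := by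
      intro t ht
      rw [norm_sub_rev]
      exact hb t ht
    have := key_case q p m n τ σ hσ.2.1 hσ.2.2.2 r L hL0 hLp hb' j i hi
      (U j) (T i) (T (i+1)) (hUmem j) (hTmem i) (hTmem (i+1)) hτUj hσTi hσTi1
      (le_of_lt hcase) hUT
    rw [norm_sub_rev] at this
    exact this

/-- the Fréchet distance is at most the discrete Fréchet distance, and the
discrete Fréchet distance exceeds the continuous one by at most the length `L` of the
longest edge of the two polygonal curves. -/
theorem discrete_frechet_bounds {d : ℕ} (p q : ℕ → EuclideanSpace ℝ (Fin d))
    (n m : ℕ) (hn : 1 ≤ n) (hm : 1 ≤ m) (L : ℝ)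
    (hLp : ∀ i < n, ‖p (i+1) - p i‖ ≤ L) (hLq : ∀ j < m, ‖q (j+1) - q j‖ ≤ L) :
    frechetDist' (polyline p) (polyline q) n m ≤ discreteFrechet p q n m ∧
    discreteFrechet p q n m ≤ frechetDist' (polyline p) (polyline q) n m + L := by
  classical
  set F := {r : ℝ | ∃ σ τ : ℝ → ℝ, ReparamTo (n:ℝ) σ ∧ ReparamTo (m:ℝ) τ ∧
    ∀ t ∈ Icc (0:ℝ) 1, ‖polyline p (σ t) - polyline q (τ t)‖ ≤ r} with hF
  set D := {r : ℝ | ∃ K : ℕ, ∃ c : ℕ → ℕ × ℕ, IsCoupling n m K c ∧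
    ∀ k ≤ K, ‖p (c k).1 - q (c k).2‖ ≤ r} with hD
  have hgoal1 : frechetDist' (polyline p) (polyline q) n m = sInf F := rfl
  have hgoal2 : discreteFrechet p q n m = sInf D := rfl
  rw [hgoal1, hgoal2]
  -- D is nonempty: the staircase coupling
  have hDne : D.Nonempty := by
    refine ⟨(Finset.range (n+m+1)).sup' ⟨0, by simp⟩
        (fun k => ‖p (min k n) - q (k - n)‖),
      n+m, fun k => (min k n, k - n), ⟨?_, ?_, ?_⟩, ?_⟩
    · simp
    · show ((n+m) ⊓ n, (n+m) - n) = (n, m)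
      have h1 : (n+m) ⊓ n = n := by omega
      have h2 : n + m - n = m := by omega
      rw [h1, h2]
    · intro k hk
      refine ⟨?_, ?_, ?_⟩
      · show (k+1) ⊓ n = k ⊓ n ∨ (k+1) ⊓ n = k ⊓ n + 1
        omega
      · show (k+1) - n = k - n ∨ (k+1) - n = (k - n) + 1
        omega
      · show ((k+1) ⊓ n, (k+1) - n) ≠ (k ⊓ n, k - n)
        intro h
        rw [Prod.ext_iff] at h
        simp only at h
        omega
    · intro k hk
      exact Finset.le_sup' (fun k => ‖p (min k n) - q (k - n)‖)
        (Finset.mem_range.2 (by omega))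
  -- D is bounded below by 0
  have hDbd : BddBelow D := by
    refine ⟨0, fun r hr => ?_⟩
    obtain ⟨K, c, hc, h⟩ := hr
    exact le_trans (norm_nonneg _) (h 0 (Nat.zero_le _))
  -- F is bounded below by 0
  have hFbd : BddBelow F := by
    refine ⟨0, fun r hr => ?_⟩
    obtain ⟨σ, τ, hσ, hτ, h⟩ := hr
    exact le_trans (norm_nonneg _) (h 0 ⟨le_refl _, zero_le_one⟩)
  -- F is nonempty: linear reparametrizations plus compactness
  have hFne : F.Nonempty := by
    have hmaps : ∀ N : ℕ, MapsTo (fun t : ℝ => (N:ℝ) * t) (Icc 0 1) (Icc 0 (N:ℝ)) := by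
      intro N t ht
      constructor
      · exact mul_nonneg (Nat.cast_nonneg N) ht.1
      · calc (N:ℝ) * t ≤ N * 1 := mul_le_mul_of_nonneg_left ht.2 (Nat.cast_nonneg N)
          _ = N := by ring
    have hcont : ContinuousOn
        (fun t : ℝ => polyline p ((n:ℝ) * t) - polyline q ((m:ℝ) * t)) (Icc 0 1) := by
      apply ContinuousOn.sub
      · exact ((interp_continuousOn p n).comp (by fun_prop) (hmaps n))
      · exact ((interp_continuousOn q m).comp (by fun_prop) (hmaps m))
    obtain ⟨C, hC⟩ := IsCompact.exists_bound_of_continuousOn isCompact_Icc hcont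
    refine ⟨C, fun t => (n:ℝ) * t, fun t => (m:ℝ) * t, ?_, ?_, fun t ht => hC t ht⟩
    · exact ⟨by fun_prop, fun s hs t ht hst =>
        mul_le_mul_of_nonneg_left hst (Nat.cast_nonneg n), mul_zero _, mul_one _⟩
    · exact ⟨by fun_prop, fun s hs t ht hst =>
        mul_le_mul_of_nonneg_left hst (Nat.cast_nonneg m), mul_zero _, mul_one _⟩
  constructor
  · apply le_csInf hDne
    intro r hr
    obtain ⟨K, c, hc, hrk⟩ := hr
    obtain ⟨σ, τ, hσ, hτ, hb⟩ := reparam_of_coupling p q n m hn r K c hc hrk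
    exact csInf_le hFbd ⟨σ, τ, hσ, hτ, hb⟩
  · have h1 : ∀ r ∈ F, sInf D ≤ r + L := by
      intro r hr
      obtain ⟨σ, τ, hσ, hτ, hb⟩ := hr
      obtain ⟨K, c, hc, hbk⟩ :=
        coupling_of_reparam p q n m hn hm L r hLp hLq σ τ hσ hτ hb
      exact csInf_le hDbd ⟨K, c, hc, hbk⟩
    have h2 : sInf D - L ≤ sInf F :=
      le_csInf hFne (fun r hr => by linarith [h1 r hr])
    linarith
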